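/- For every fixed k ≥ 2, in the ring of formal power series in y over ℤ: (1−y−y²)^{k+1} · ∑_{n≥0} q_{n,k} y^n = (2−y)·y^{2k}; and for k = 1: (1−y−y²)² · ( ∑_{n≥0} q_{n,1} y^n − y ) = (2−y)·y². -/

import Mathlib

open Polynomial

/-- The cube polynomials `Q n` of the matchable Lucas cubes. -/
noncomputable def Q : ℕ → Polynomial ℤ
  | 0 => 1
  | 1 => 2 + X
  | 2 => 3 + 2 * X
  | 3 => 4 + 3 * X
  | (n + 4) => Q (n + 3) + (1 + X) * Q (n + 2)

/-- `q n k` : the number of `k`-dimensional induced hypercubes of `Ω_n`,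
i.e. the coefficient of `x^k` in `Q n`. -/
noncomputable def q (n k : ℕ) : ℤ := (Q n).coeff k

-- small values
lemma q00 : q 0 0 = 1 := by simp [q, Q]
lemma q0s (k : ℕ) : q 0 (k+1) = 0 := by simp [q, Q, coeff_one]
lemma q10 : q 1 0 = 2 := by simp [q, Q]
lemma q11 : q 1 1 = 1 := by simp [q, Q]
lemma q1s (k : ℕ) : q 1 (k+2) = 0 := by simp [q, Q, coeff_X]
lemma q20 : q 2 0 = 3 := by simp [q, Q]
lemma q21 : q 2 1 = 2 := by simp [q, Q, coeff_X]
lemma q2s (k : ℕ) : q 2 (k+2) = 0 := by simp [q, Q, coeff_X]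
lemma q30 : q 3 0 = 4 := by simp [q, Q]
lemma q31 : q 3 1 = 3 := by simp [q, Q, coeff_X]
lemma q3s (k : ℕ) : q 3 (k+2) = 0 := by simp [q, Q, coeff_X]

lemma qrec0 (n : ℕ) : q (n+4) 0 = q (n+3) 0 + q (n+2) 0 := by
  show (Q (n+3) + (1 + X) * Q (n+2)).coeff 0 = _
  simp [q, add_mul, mul_comm]

lemma qrec (n k : ℕ) : q (n+4) (k+1) = q (n+3) (k+1) + q (n+2) (k+1) + q (n+2) k := by
  show (Q (n+3) + (1 + X) * Q (n+2)).coeff (k+1) = _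
  simp [q, add_mul, coeff_X_mul]
  ring

local notation "A" => (1 - PowerSeries.X - PowerSeries.X ^ 2 : PowerSeries ℤ)
local notation "Y" => (PowerSeries.X : PowerSeries ℤ)

lemma coeffA0 (f : PowerSeries ℤ) :
    PowerSeries.coeff (R := ℤ) 0 (A * f) = PowerSeries.coeff (R := ℤ) 0 f := by
  simp [PowerSeries.coeff_zero_eq_constantCoeff, map_mul]

lemma coeffA1 (f : PowerSeries ℤ) :
    PowerSeries.coeff (R := ℤ) 1 (A * f)
      = PowerSeries.coeff (R := ℤ) 1 f - PowerSeries.coeff (R := ℤ) 0 f := by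
  rw [sub_mul, sub_mul, one_mul, map_sub, map_sub,
    PowerSeries.coeff_succ_X_mul 0 f, PowerSeries.coeff_X_pow_mul' f 2 1]
  norm_num

lemma coeffA (f : PowerSeries ℤ) (n : ℕ) :
    PowerSeries.coeff (R := ℤ) (n + 2) (A * f)
      = PowerSeries.coeff (R := ℤ) (n + 2) f - PowerSeries.coeff (R := ℤ) (n + 1) f
          - PowerSeries.coeff (R := ℤ) n f := by
  rw [sub_mul, sub_mul, one_mul, map_sub, map_sub,
    PowerSeries.coeff_succ_X_mul (n + 1) f, PowerSeries.coeff_X_pow_mul f 2 n]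

lemma L0 : A * PowerSeries.mk (fun n => q n 0) = 1 + Y - Y ^ 3 := by
  ext n
  match n with
  | 0 => rw [coeffA0]; simp [q00, PowerSeries.coeff_one, PowerSeries.coeff_X, PowerSeries.coeff_X_pow]
  | 1 => rw [coeffA1]; simp [q00, q10, PowerSeries.coeff_one, PowerSeries.coeff_X, PowerSeries.coeff_X_pow]
  | 2 => rw [coeffA _ 0]; simp [q00, q10, q20, PowerSeries.coeff_one, PowerSeries.coeff_X, PowerSeries.coeff_X_pow]
  | 3 => rw [coeffA _ 1]; simp [q10, q20, q30, PowerSeries.coeff_one, PowerSeries.coeff_X, PowerSeries.coeff_X_pow]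
  | (n + 4) =>
    rw [coeffA _ (n + 2)]
    simp [qrec0, PowerSeries.coeff_one, PowerSeries.coeff_X, PowerSeries.coeff_X_pow]


lemma coeffY2 (g : ℕ → ℤ) (n : ℕ) :
    PowerSeries.coeff (R := ℤ) (n + 2) (Y ^ 2 * PowerSeries.mk g) = g n := by
  rw [PowerSeries.coeff_X_pow_mul]; simp

lemma L1 : A * (PowerSeries.mk (fun n => q n 1) - Y)
    = Y ^ 2 * PowerSeries.mk (fun n => q n 0) + Y ^ 2 - Y ^ 3 := by
  ext n
  match n with
  | 0 =>
    rw [coeffA0]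
    simp [q0s, PowerSeries.coeff_X, PowerSeries.coeff_X_pow,
      PowerSeries.coeff_X_pow_mul']
  | 1 =>
    rw [coeffA1]
    simp [q0s, q11, PowerSeries.coeff_X, PowerSeries.coeff_X_pow,
      PowerSeries.coeff_X_pow_mul']
  | 2 =>
    rw [coeffA _ 0]
    simp [q0s, q11, q21, q00, PowerSeries.coeff_X, PowerSeries.coeff_X_pow,
      PowerSeries.coeff_X_pow_mul']
  | 3 =>
    rw [coeffA _ 1]
    simp [q11, q21, q31, q10, PowerSeries.coeff_X, PowerSeries.coeff_X_pow,
      PowerSeries.coeff_X_pow_mul']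
  | (n + 4) =>
    rw [coeffA _ (n + 2)]
    simp [PowerSeries.coeff_X, PowerSeries.coeff_X_pow,
      PowerSeries.coeff_X_pow_mul', qrec n 0]
    ring

lemma L2 : A * PowerSeries.mk (fun n => q n 2)
    = Y ^ 2 * (PowerSeries.mk (fun n => q n 1) - Y) := by
  ext n
  match n with
  | 0 =>
    rw [coeffA0]
    simp [q0s, PowerSeries.coeff_X_pow_mul']
  | 1 =>
    rw [coeffA1]
    simp [q0s, q1s, PowerSeries.coeff_X_pow_mul']
  | 2 =>
    rw [coeffA _ 0]
    simp [q0s, q1s, q2s, PowerSeries.coeff_X, PowerSeries.coeff_X_pow_mul']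
  | 3 =>
    rw [coeffA _ 1]
    simp [q1s, q2s, q3s, q11, PowerSeries.coeff_X, PowerSeries.coeff_X_pow_mul']
  | (n + 4) =>
    rw [coeffA _ (n + 2)]
    simp [PowerSeries.coeff_X, PowerSeries.coeff_X_pow_mul', qrec n 1]
    ring

lemma Ls (k : ℕ) : A * PowerSeries.mk (fun n => q n (k + 3))
    = Y ^ 2 * PowerSeries.mk (fun n => q n (k + 2)) := by
  ext n
  match n with
  | 0 =>
    rw [coeffA0]
    simp [q0s, PowerSeries.coeff_X_pow_mul']
  | 1 =>
    rw [coeffA1]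
    simp [q0s, q1s, PowerSeries.coeff_X_pow_mul']
  | 2 =>
    rw [coeffA _ 0]
    simp [q0s, q1s, q2s, PowerSeries.coeff_X_pow_mul']
  | 3 =>
    rw [coeffA _ 1]
    simp [q1s, q2s, q3s, PowerSeries.coeff_X_pow_mul']
  | (n + 4) =>
    rw [coeffA _ (n + 2)]
    simp [PowerSeries.coeff_X_pow_mul', qrec n (k + 2)]
    ring

theorem generating_function_of_q_fixed_k :
    (∀ k : ℕ, 2 ≤ k →
        (1 - PowerSeries.X - PowerSeries.X ^ 2) ^ (k + 1)
            * PowerSeries.mk (fun n => q n k)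
          = (2 - PowerSeries.X) * PowerSeries.X ^ (2 * k)) ∧
    (1 - PowerSeries.X - PowerSeries.X ^ 2) ^ 2
        * (PowerSeries.mk (fun n => q n 1) - PowerSeries.X)
      = ((2 : PowerSeries ℤ) - PowerSeries.X) * PowerSeries.X ^ 2 := by
  have base2 : (1 - PowerSeries.X - PowerSeries.X ^ 2) ^ 2
      * (PowerSeries.mk (fun n => q n 1) - PowerSeries.X)
      = ((2 : PowerSeries ℤ) - PowerSeries.X) * PowerSeries.X ^ 2 := by
    linear_combination (1 - PowerSeries.X - PowerSeries.X ^ 2 : PowerSeries ℤ) * L1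
      + (PowerSeries.X : PowerSeries ℤ) ^ 2 * L0
  refine ⟨?_, base2⟩
  intro k hk
  obtain ⟨m, rfl⟩ : ∃ m, k = m + 2 := ⟨k - 2, by omega⟩
  clear hk
  induction m with
  | zero =>
    simp only [Nat.zero_add]
    linear_combination (1 - PowerSeries.X - PowerSeries.X ^ 2 : PowerSeries ℤ) ^ 2 * L2
      + (PowerSeries.X : PowerSeries ℤ) ^ 2 * base2
  | succ m ih =>
    linear_combination (1 - PowerSeries.X - PowerSeries.X ^ 2 : PowerSeries ℤ) ^ (m + 3) * Ls m
      + (PowerSeries.X : PowerSeries ℤ) ^ 2 * ih
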